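/- Let V: X x R^n -> R^n be continuous, satisfying positive correlation and Nash stationarity, and let F: X -> R^n be continuous. Suppose x: [0,infty) -> X and p: [0,infty) -> R^n are bounded trajectories with p'(t)V(x(t),p(t)) -> 0 and ||p(t) - F(x(t))|| -> 0 as t -> infty. Then the distance from x(t) to the Nash equilibrium set NE(F) := {x in X : x in argmax_{y in X} y'F(x)} converges to 0. -/

import Mathlib

open scoped BigOperators

/-- The probability simplex in `ℝ^n`. -/
def simplex (n : ℕ) : Set (Fin n → ℝ) := stdSimplex ℝ (Fin n)

/-- Dot product `p'x`. -/
def dot {n : ℕ} (p x : Fin n → ℝ) : ℝ := ∑ i, p i * x i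

/-- Best response set `B(p) = argmax_{y ∈ X} y'p`. -/
def BR {n : ℕ} (p : Fin n → ℝ) : Set (Fin n → ℝ) :=
  {x ∈ simplex n | ∀ y ∈ simplex n, dot y p ≤ dot x p}

/-- Nash equilibrium set of the stationary game `F`. -/
def NE {n : ℕ} (F : (Fin n → ℝ) → (Fin n → ℝ)) : Set (Fin n → ℝ) :=
  {x ∈ simplex n | x ∈ BR (F x)}

set_option maxHeartbeats 1000000 in
theorem stmt_16 {n : ℕ} (hn : 0 < n)
    (V : (Fin n → ℝ) → (Fin n → ℝ) → (Fin n → ℝ))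
    (hVcont : Continuous fun q : (Fin n → ℝ) × (Fin n → ℝ) => V q.1 q.2)
    (hPC : ∀ y ∈ simplex n, ∀ q : Fin n → ℝ, V y q ≠ 0 → 0 < dot q (V y q))
    (hNS : ∀ y ∈ simplex n, ∀ q : Fin n → ℝ, (V y q = 0 ↔ y ∈ BR q))
    (F : (Fin n → ℝ) → (Fin n → ℝ)) (hFcont : Continuous F)
    (x p : ℝ → Fin n → ℝ)
    (hxX : ∀ t, x t ∈ simplex n)
    (hpBdd : ∃ M : ℝ, ∀ t, ‖p t‖ ≤ M)
    (hcorr : Filter.Tendsto (fun t => dot (p t) (V (x t) (p t)))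
      Filter.atTop (nhds 0))
    (happrox : Filter.Tendsto (fun t => ‖p t - F (x t)‖) Filter.atTop (nhds 0)) :
    Filter.Tendsto (fun t => Metric.infDist (x t) (NE F))
      Filter.atTop (nhds 0) := by
  classical
  by_contra hcon
  -- extract ε and a sequence of times where infDist ≥ ε
  rw [Metric.tendsto_nhds] at hcon
  push_neg at hcon
  obtain ⟨ε, hε, hfreq⟩ := hcon
  have hseq : ∀ k : ℕ, ∃ t ≥ (k : ℝ),
      ε ≤ dist (Metric.infDist (x t) (NE F)) 0 := by
    intro k
    obtain ⟨t, ht, hd⟩ := (Filter.frequently_atTop.mp hfreq) (k : ℝ)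
    exact ⟨t, ht, hd⟩
  choose u hu1 hu2 using hseq
  have hu : Filter.Tendsto u Filter.atTop Filter.atTop :=
    Filter.tendsto_atTop_mono hu1 tendsto_natCast_atTop_atTop
  -- subsequence with x(u k) converging in the compact simplex
  obtain ⟨xs, hxsmem, φ, hφ, hxlim⟩ :=
    (isCompact_stdSimplex ℝ (Fin n)).tendsto_subseq (fun k => hxX (u k))
  -- further subsequence with p converging in a closed ball
  obtain ⟨M, hM⟩ := hpBdd
  have hpball : ∀ k : ℕ, p (u (φ k)) ∈ Metric.closedBall (0 : Fin n → ℝ) M := by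
    intro k
    simpa [Metric.mem_closedBall, dist_zero_right] using hM (u (φ k))
  obtain ⟨ps, _, ψ, hψ, hplim⟩ :=
    (isCompact_closedBall (0 : Fin n → ℝ) M).tendsto_subseq hpball
  set v : ℕ → ℝ := fun k => u (φ (ψ k)) with hv_def
  have hv : Filter.Tendsto v Filter.atTop Filter.atTop :=
    hu.comp ((hφ.comp hψ).tendsto_atTop)
  have hxv : Filter.Tendsto (fun k => x (v k)) Filter.atTop (nhds xs) :=
    hxlim.comp hψ.tendsto_atTop
  have hpv : Filter.Tendsto (fun k => p (v k)) Filter.atTop (nhds ps) := hplim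
  -- dot is continuous
  have hdot : Continuous fun q : (Fin n → ℝ) × (Fin n → ℝ) => dot q.1 q.2 := by
    unfold dot
    exact continuous_finset_sum _ fun i _ =>
      ((continuous_apply i).comp continuous_fst).mul
        ((continuous_apply i).comp continuous_snd)
  -- ps = F xs
  have hpFv : Filter.Tendsto (fun k => ‖p (v k) - F (x (v k))‖)
      Filter.atTop (nhds ‖ps - F xs‖) :=
    (continuous_norm.tendsto _).comp ((hpv.sub ((hFcont.tendsto _).comp hxv)))
  have hpF0 : Filter.Tendsto (fun k => ‖p (v k) - F (x (v k))‖)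
      Filter.atTop (nhds 0) := happrox.comp hv
  have hpsF : ps = F xs := by
    have := tendsto_nhds_unique hpFv hpF0
    have h2 : ps - F xs = 0 := by simpa using norm_eq_zero.mp this
    exact sub_eq_zero.mp h2
  -- dot ps (V xs ps) = 0
  have hVv : Filter.Tendsto (fun k => V (x (v k)) (p (v k)))
      Filter.atTop (nhds (V xs ps)) :=
    (hVcont.tendsto (xs, ps)).comp (hxv.prodMk_nhds hpv)
  have hcorrv : Filter.Tendsto (fun k => dot (p (v k)) (V (x (v k)) (p (v k))))
      Filter.atTop (nhds (dot ps (V xs ps))) :=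
    (hdot.tendsto (ps, V xs ps)).comp (hpv.prodMk_nhds hVv)
  have hcorr0 : dot ps (V xs ps) = 0 :=
    tendsto_nhds_unique hcorrv (hcorr.comp hv)
  -- hence V xs ps = 0, so xs ∈ NE F
  have hV0 : V xs ps = 0 := by
    by_contra hne
    have := hPC xs hxsmem ps hne
    linarith
  have hxsNE : xs ∈ NE F := by
    refine ⟨hxsmem, (hNS xs hxsmem (F xs)).mp ?_⟩
    rw [← hpsF]; exact hV0
  -- contradiction: infDist (x (v k)) (NE F) → 0 but ≥ ε
  have hdlim : Filter.Tendsto (fun k => Metric.infDist (x (v k)) (NE F))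
      Filter.atTop (nhds 0) := by
    have : Filter.Tendsto (fun k => Metric.infDist (x (v k)) (NE F))
        Filter.atTop (nhds (Metric.infDist xs (NE F))) :=
      ((Metric.continuous_infDist_pt (NE F)).tendsto xs).comp hxv
    rwa [Metric.infDist_zero_of_mem hxsNE] at this
  have hev : ∀ᶠ k in Filter.atTop,
      Metric.infDist (x (v k)) (NE F) < ε :=
    hdlim.eventually_lt_const hε
  obtain ⟨k, hk⟩ := hev.exists
  have hge : ε ≤ Metric.infDist (x (v k)) (NE F) := by
    have := hu2 (φ (ψ k))
    rwa [Real.dist_eq, sub_zero,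
      abs_of_nonneg Metric.infDist_nonneg] at this
  linarith
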